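/- If for every ξ ∈ X* with ‖ξ‖ < γ the point x̄ is the unique global minimizer of y ↦ f(y) − ⟨ξ, y⟩, then for every Lipschitz function ζ : X → ℝ with Lipschitz constant strictly less than γ, x̄ is the unique global minimizer of y ↦ f(y) + ζ(y); and conversely. -/

import Mathlib

set_option synthInstance.maxHeartbeats 1000000
set_option maxHeartbeats 1000000


/-- tilt invariance by dual elements of norm < γ is equivalent to
invariance under Lipschitz perturbations with Lipschitz constant < γ. -/
theorem tilt_invariance_iff_lipschitz_invariance
    {X : Type*} [NormedAddCommGroup X] [NormedSpace ℝ X]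
    (f : X → EReal) (hbot : ∀ x, f x ≠ ⊥) (xbar : X) (hdom : f xbar ≠ ⊤)
    (γ : ℝ) (hγ : 0 < γ) :
    (∀ ξ : X →L[ℝ] ℝ, ‖ξ‖ < γ →
        {y : X | ∀ z : X, f y - ((ξ y : ℝ) : EReal) ≤ f z - ((ξ z : ℝ) : EReal)} = {xbar})
      ↔ (∀ (ζ : X → ℝ) (K : NNReal), LipschitzWith K ζ → (K : ℝ) < γ →
          {y : X | ∀ z : X, f y + ((ζ y : ℝ) : EReal) ≤ f z + ((ζ z : ℝ) : EReal)} = {xbar}) := by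
  constructor
  · intro h ζ K hζ hK
    have ha : ((f xbar).toReal : EReal) = f xbar := EReal.coe_toReal hdom (hbot xbar)
    set a := (f xbar).toReal with ha'
    -- growth condition
    have growth : ∀ z : X, ((a + γ * ‖z - xbar‖ : ℝ) : EReal) ≤ f z := by
      intro z
      by_cases hz : z = xbar
      · subst hz
        rw [← ha]
        simp
      · rcases eq_or_ne (f z) ⊤ with ht | ht
        · rw [ht]; exact le_top
        · have hbz : ((f z).toReal : EReal) = f z := EReal.coe_toReal ht (hbot z)
          set b := (f z).toReal with hb'
          rw [← hbz, EReal.coe_le_coe_iff]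
          set n := ‖z - xbar‖ with hn
          have hn0 : 0 < n := norm_pos_iff.2 (sub_ne_zero.2 hz)
          have claim0 : ∀ c : ℝ, 0 ≤ c → c < γ → a + c * n ≤ b := by
            intro c h0 hc
            obtain ⟨g, hg1, hgz⟩ := exists_dual_vector ℝ (z - xbar) (norm_ne_zero_iff.2 (sub_ne_zero.2 hz))
            set ξ := c • g with hξ
            have hξn : ‖ξ‖ < γ := by
              have : ‖ξ‖ = c := by
                rw [hξ, norm_smul c g, hg1, mul_one, Real.norm_eq_abs, abs_of_nonneg h0]
              rwa [this]
            have hx : xbar ∈ {y : X | ∀ w : X,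
                f y - ((ξ y : ℝ) : EReal) ≤ f w - ((ξ w : ℝ) : EReal)} := by
              rw [h ξ hξn]; rfl
            have hxz := hx z
            rw [← ha, ← hbz] at hxz
            have h1 : a - ξ xbar ≤ b - ξ z := by
              have e1 : ((a : EReal) - ((ξ xbar : ℝ) : EReal)) = ((a - ξ xbar : ℝ) : EReal) := by
                norm_cast
              have e2 : ((b : EReal) - ((ξ z : ℝ) : EReal)) = ((b - ξ z : ℝ) : EReal) := by
                norm_cast
              rw [e1, e2, EReal.coe_le_coe_iff] at hxz
              exact hxz
            have hξd : ξ z - ξ xbar = c * n := by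
              have : ξ z - ξ xbar = c * (g z - g xbar) := by
                simp [hξ, mul_sub]
              rw [this, ← map_sub, hgz]
              simp [hn]
            linarith
          have claim : ∀ c : ℝ, c < γ → a + c * n ≤ b := by
            intro c hc
            rcases le_or_gt 0 c with h0 | h0
            · exact claim0 c h0 hc
            · have h1 := claim0 0 le_rfl hγ
              nlinarith [hn0.le]
          have tend : Filter.Tendsto (fun c : ℝ => a + c * n)
              (nhdsWithin γ (Set.Iio γ)) (nhds (a + γ * n)) :=
            ((continuous_const.add (continuous_id.mul continuous_const)).tendsto γ).mono_left
              nhdsWithin_le_nhds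
          exact le_of_tendsto tend
            (Filter.eventually_of_mem self_mem_nhdsWithin fun c hc => claim c hc)
    have lip : ∀ u v : X, |ζ u - ζ v| ≤ (K : ℝ) * ‖u - v‖ := by
      intro u v
      have := hζ.dist_le_mul u v
      rwa [Real.dist_eq, dist_eq_norm] at this
    ext y
    simp only [Set.mem_setOf_eq, Set.mem_singleton_iff]
    constructor
    · intro hy
      have h1 := hy xbar
      rw [← ha] at h1
      have hyt : f y ≠ ⊤ := by
        intro ht
        rw [ht] at h1
        rw [EReal.top_add_of_ne_bot (by exact_mod_cast EReal.coe_ne_bot _)] at h1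
        have : ((a : EReal) + ((ζ xbar : ℝ) : EReal)) = ((a + ζ xbar : ℝ) : EReal) := by norm_cast
        rw [this, top_le_iff] at h1
        exact EReal.coe_ne_top _ h1
      have hby : ((f y).toReal : EReal) = f y := EReal.coe_toReal hyt (hbot y)
      set b := (f y).toReal with hb'
      rw [← hby] at h1
      have h1' : b + ζ y ≤ a + ζ xbar := by
        have e1 : ((b : EReal) + ((ζ y : ℝ) : EReal)) = ((b + ζ y : ℝ) : EReal) := by norm_cast
        have e2 : ((a : EReal) + ((ζ xbar : ℝ) : EReal)) = ((a + ζ xbar : ℝ) : EReal) := by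
          norm_cast
        rw [e1, e2, EReal.coe_le_coe_iff] at h1
        exact h1
      have h2 := growth y
      rw [← hby, EReal.coe_le_coe_iff] at h2
      have h3 : ζ xbar - ζ y ≤ (K : ℝ) * ‖y - xbar‖ := by
        have := (abs_le.1 (lip xbar y)).2
        rwa [norm_sub_rev] at this
      have hn := norm_nonneg (y - xbar)
      have hnz : ‖y - xbar‖ = 0 := by nlinarith
      exact sub_eq_zero.1 (norm_eq_zero.1 hnz)
    · intro hy z
      rw [hy]
      rcases eq_or_ne (f z) ⊤ with ht | ht
      · rw [ht, EReal.top_add_of_ne_bot (by exact_mod_cast EReal.coe_ne_bot _)]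
        exact le_top
      · have hbz : ((f z).toReal : EReal) = f z := EReal.coe_toReal ht (hbot z)
        set b := (f z).toReal with hb'
        rw [← ha, ← hbz]
        have e1 : ((a : EReal) + ((ζ xbar : ℝ) : EReal)) = ((a + ζ xbar : ℝ) : EReal) := by
          norm_cast
        have e2 : ((b : EReal) + ((ζ z : ℝ) : EReal)) = ((b + ζ z : ℝ) : EReal) := by norm_cast
        rw [e1, e2, EReal.coe_le_coe_iff]
        have h2 := growth z
        rw [← hbz, EReal.coe_le_coe_iff] at h2
        have h3 : ζ xbar - ζ z ≤ (K : ℝ) * ‖z - xbar‖ := by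
          have := (abs_le.1 (lip xbar z)).2
          rwa [norm_sub_rev] at this
        have hn := norm_nonneg (z - xbar)
        nlinarith
  · intro h ξ hξ
    have hl : LipschitzWith ‖ξ‖₊ (fun x => -(ξ x)) := by
      exact ξ.lipschitz.neg
    have hs := h (fun x => -(ξ x)) ‖ξ‖₊ hl (by rwa [coe_nnnorm])
    rw [← hs]
    ext y
    simp only [Set.mem_setOf_eq, EReal.coe_neg, sub_eq_add_neg]
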